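/- Let G be an abelian group and A ⊆ G. Then A contains a sumset B + C with B, C ⊆ G infinite if and only if there exist nonprincipal ultrafilters 𝒰, 𝒱 on G such that A ∈ 𝒰 ⊕ 𝒱 and A ∈ 𝒱 ⊕ 𝒰. -/

import Mathlib

open Classical in
/-- Pick a fresh element of the `𝒰`-side. -/
noncomputable def sumsetPairB {G : Type*} [AddCommGroup G] (A Us : Set G)
    (l : List (G × G)) : G :=
  if h : {x | x ∈ Us ∧ (∀ p ∈ l, x + p.2 ∈ A) ∧ ∀ p ∈ l, x ≠ p.1}.Nonempty
  then h.choose else 0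

open Classical in
/-- Pick a fresh element of the `𝒱`-side. -/
noncomputable def sumsetPairC {G : Type*} [AddCommGroup G] (A Vs : Set G)
    (l : List (G × G)) (b : G) : G :=
  if h : {x | x ∈ Vs ∧ (∀ p ∈ l, x + p.1 ∈ A) ∧ x + b ∈ A ∧ ∀ p ∈ l, x ≠ p.2}.Nonempty
  then h.choose else 0

noncomputable def sumsetPairF {G : Type*} [AddCommGroup G] (A Us Vs : Set G)
    (l : List (G × G)) : G × G :=
  (sumsetPairB A Us l, sumsetPairC A Vs l (sumsetPairB A Us l))

noncomputable def sumsetL {G : Type*} [AddCommGroup G] (A Us Vs : Set G) : ℕ → List (G × G) :=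
  fun n => (fun l => sumsetPairF A Us Vs l :: l)^[n] []

noncomputable def sumsetSeq {G : Type*} [AddCommGroup G] (A Us Vs : Set G) (n : ℕ) : G × G :=
  sumsetPairF A Us Vs (sumsetL A Us Vs n)

lemma sumsetL_succ {G : Type*} [AddCommGroup G] (A Us Vs : Set G) (n : ℕ) :
    sumsetL A Us Vs (n + 1) = sumsetSeq A Us Vs n :: sumsetL A Us Vs n := by
  simp [sumsetL, sumsetSeq, Function.iterate_succ_apply']

lemma mem_sumsetL {G : Type*} [AddCommGroup G] (A Us Vs : Set G) (n : ℕ) (p : G × G) :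
    p ∈ sumsetL A Us Vs n ↔ ∃ m < n, p = sumsetSeq A Us Vs m := by
  induction n with
  | zero => simp [sumsetL]
  | succ n ih =>
      rw [sumsetL_succ]
      simp only [List.mem_cons, ih]
      constructor
      · rintro (h | ⟨m, hm, h⟩)
        · exact ⟨n, Nat.lt_succ_self n, h⟩
        · exact ⟨m, hm.trans (Nat.lt_succ_self n), h⟩
      · rintro ⟨m, hm, h⟩
        rcases Nat.lt_succ_iff_lt_or_eq.1 hm with hm | rfl
        · exact Or.inr ⟨m, hm, h⟩
        · exact Or.inl h

/-- The set of elements avoiding finitely many translates and finitely many points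
is in a nonprincipal ultrafilter. -/
lemma sumset_list_mem {G : Type*} [AddCommGroup G] (𝒰 : Ultrafilter G) (A : Set G)
    (hU : ∀ S : Set G, S.Finite → S ∉ 𝒰) (u v : G × G → G) (l : List (G × G))
    (h : ∀ p ∈ l, {x : G | x + v p ∈ A} ∈ 𝒰) :
    {x : G | (∀ p ∈ l, x + v p ∈ A) ∧ ∀ p ∈ l, x ≠ u p} ∈ 𝒰 := by
  induction l with
  | nil =>
      have : {x : G | (∀ p ∈ ([] : List (G × G)), x + v p ∈ A) ∧
          ∀ p ∈ ([] : List (G × G)), x ≠ u p} = Set.univ := by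
        ext x; simp
      rw [this]; exact Filter.univ_mem
  | cons p l ih =>
      have h1 : {x : G | x + v p ∈ A} ∈ 𝒰 := h p (List.mem_cons_self)
      have h2 : {x : G | x ≠ u p} ∈ 𝒰 :=
        Ultrafilter.compl_mem_iff_notMem.2 (hU {u p} (Set.finite_singleton _))
      have h3 := ih (fun q hq => h q (List.mem_cons_of_mem p hq))
      filter_upwards [h1, h2, h3] with x hx1 hx2 hx3
      refine ⟨fun q hq => ?_, fun q hq => ?_⟩
      · rcases List.mem_cons.1 hq with rfl | hq
        · exact hx1
        · exact hx3.1 q hq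
      · rcases List.mem_cons.1 hq with rfl | hq
        · exact hx2
        · exact hx3.2 q hq

section spec
variable {G : Type*} [AddCommGroup G] (𝒰 𝒱 : Ultrafilter G) (A : Set G)

/-- The key step: under the hypotheses, the chosen pair has all required properties. -/
lemma sumsetPair_spec
    (hU : ∀ S : Set G, S.Finite → S ∉ 𝒰) (hV : ∀ S : Set G, S.Finite → S ∉ 𝒱)
    (hUV : {g : G | {x : G | x + g ∈ A} ∈ 𝒱} ∈ 𝒰)
    (hVU : {g : G | {x : G | x + g ∈ A} ∈ 𝒰} ∈ 𝒱)
    (l : List (G × G))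
    (hl : ∀ p ∈ l, p.1 ∈ {g : G | {x : G | x + g ∈ A} ∈ 𝒱} ∧
        p.2 ∈ {g : G | {x : G | x + g ∈ A} ∈ 𝒰}) :
    sumsetPairB A {g : G | {x : G | x + g ∈ A} ∈ 𝒱} l ∈ {g : G | {x : G | x + g ∈ A} ∈ 𝒱} ∧
    (∀ p ∈ l, sumsetPairB A {g : G | {x : G | x + g ∈ A} ∈ 𝒱} l + p.2 ∈ A) ∧
    (∀ p ∈ l, sumsetPairB A {g : G | {x : G | x + g ∈ A} ∈ 𝒱} l ≠ p.1) ∧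
    (sumsetPairC A {g : G | {x : G | x + g ∈ A} ∈ 𝒰} l
        (sumsetPairB A {g : G | {x : G | x + g ∈ A} ∈ 𝒱} l)
      ∈ {g : G | {x : G | x + g ∈ A} ∈ 𝒰}) ∧
    (∀ p ∈ l, sumsetPairC A {g : G | {x : G | x + g ∈ A} ∈ 𝒰} l
        (sumsetPairB A {g : G | {x : G | x + g ∈ A} ∈ 𝒱} l) + p.1 ∈ A) ∧
    (sumsetPairC A {g : G | {x : G | x + g ∈ A} ∈ 𝒰} l
        (sumsetPairB A {g : G | {x : G | x + g ∈ A} ∈ 𝒱} l)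
      + sumsetPairB A {g : G | {x : G | x + g ∈ A} ∈ 𝒱} l ∈ A) ∧
    (∀ p ∈ l, sumsetPairC A {g : G | {x : G | x + g ∈ A} ∈ 𝒰} l
        (sumsetPairB A {g : G | {x : G | x + g ∈ A} ∈ 𝒱} l) ≠ p.2) := by
  set Us : Set G := {g : G | {x : G | x + g ∈ A} ∈ 𝒱} with hUs
  set Vs : Set G := {g : G | {x : G | x + g ∈ A} ∈ 𝒰} with hVs
  have hTB : {x : G | (∀ p ∈ l, x + p.2 ∈ A) ∧ ∀ p ∈ l, x ≠ p.1} ∈ 𝒰 :=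
    sumset_list_mem 𝒰 A hU Prod.fst Prod.snd l (fun p hp => (hl p hp).2)
  have hTC : {x : G | (∀ p ∈ l, x + p.1 ∈ A) ∧ ∀ p ∈ l, x ≠ p.2} ∈ 𝒱 :=
    sumset_list_mem 𝒱 A hV Prod.snd Prod.fst l (fun p hp => (hl p hp).1)
  have hSB : {x | x ∈ Us ∧ (∀ p ∈ l, x + p.2 ∈ A) ∧ ∀ p ∈ l, x ≠ p.1} ∈ 𝒰 := by
    filter_upwards [hUV, hTB] with x hx1 hx2 using ⟨hx1, hx2⟩
  have hSBne := Ultrafilter.nonempty_of_mem hSB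
  have hb : sumsetPairB A Us l ∈
      {x | x ∈ Us ∧ (∀ p ∈ l, x + p.2 ∈ A) ∧ ∀ p ∈ l, x ≠ p.1} := by
    rw [sumsetPairB, dif_pos hSBne]
    exact hSBne.choose_spec
  have hbA : {x : G | x + sumsetPairB A Us l ∈ A} ∈ 𝒱 := hb.1
  have hSC : {x | x ∈ Vs ∧ (∀ p ∈ l, x + p.1 ∈ A) ∧ x + sumsetPairB A Us l ∈ A ∧
      ∀ p ∈ l, x ≠ p.2} ∈ 𝒱 := by
    filter_upwards [hVU, hbA, hTC] with x hx1 hx2 hx3 using ⟨hx1, hx3.1, hx2, hx3.2⟩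
  have hSCne := Ultrafilter.nonempty_of_mem hSC
  have hc : sumsetPairC A Vs l (sumsetPairB A Us l) ∈
      {x | x ∈ Vs ∧ (∀ p ∈ l, x + p.1 ∈ A) ∧ x + sumsetPairB A Us l ∈ A ∧
        ∀ p ∈ l, x ≠ p.2} := by
    rw [sumsetPairC, dif_pos hSCne]
    exact hSCne.choose_spec
  exact ⟨hb.1, hb.2.1, hb.2.2, hc.1, hc.2.1, hc.2.2.1, hc.2.2.2⟩

end spec

/-- In an abelian group `G`, a set `A` contains a sumset `B + C` of two infinite
sets if and only if there are nonprincipal ultrafilters `𝒰, 𝒱` on `G` with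
`A ∈ 𝒰 ⊕ 𝒱` and `A ∈ 𝒱 ⊕ 𝒰`, where `A ∈ 𝒰 ⊕ 𝒱` means `{g : A − g ∈ 𝒱} ∈ 𝒰`. -/
theorem stmt4 {G : Type*} [AddCommGroup G] (A : Set G) :
    (∃ B C : Set G, B.Infinite ∧ C.Infinite ∧ ∀ b ∈ B, ∀ c ∈ C, b + c ∈ A) ↔
    ∃ 𝒰 𝒱 : Ultrafilter G,
      (∀ S : Set G, S.Finite → S ∉ 𝒰) ∧ (∀ S : Set G, S.Finite → S ∉ 𝒱) ∧
      {g : G | {x : G | x + g ∈ A} ∈ 𝒱} ∈ 𝒰 ∧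
      {g : G | {x : G | x + g ∈ A} ∈ 𝒰} ∈ 𝒱 := by
  constructor
  · rintro ⟨B, C, hB, hC, hBC⟩
    have hBne : (Filter.cofinite ⊓ Filter.principal B).NeBot :=
      hB.cofinite_inf_principal_neBot
    have hCne : (Filter.cofinite ⊓ Filter.principal C).NeBot :=
      hC.cofinite_inf_principal_neBot
    refine ⟨Ultrafilter.of (Filter.cofinite ⊓ Filter.principal B),
        Ultrafilter.of (Filter.cofinite ⊓ Filter.principal C), ?_, ?_, ?_, ?_⟩
    · intro S hS hmem
      have h1 : Sᶜ ∈ Ultrafilter.of (Filter.cofinite ⊓ Filter.principal B) :=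
        Ultrafilter.of_le _ (Filter.mem_inf_of_left hS.compl_mem_cofinite)
      exact (Ultrafilter.compl_mem_iff_notMem.1 h1) hmem
    · intro S hS hmem
      have h1 : Sᶜ ∈ Ultrafilter.of (Filter.cofinite ⊓ Filter.principal C) :=
        Ultrafilter.of_le _ (Filter.mem_inf_of_left hS.compl_mem_cofinite)
      exact (Ultrafilter.compl_mem_iff_notMem.1 h1) hmem
    · have hBmem : B ∈ Ultrafilter.of (Filter.cofinite ⊓ Filter.principal B) :=
        Ultrafilter.of_le _ (Filter.mem_inf_of_right (Filter.mem_principal_self B))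
      refine Filter.mem_of_superset hBmem fun g hg => ?_
      have hCmem : C ∈ Ultrafilter.of (Filter.cofinite ⊓ Filter.principal C) :=
        Ultrafilter.of_le _ (Filter.mem_inf_of_right (Filter.mem_principal_self C))
      exact Filter.mem_of_superset hCmem fun x hx => by
        have := hBC g hg x hx
        rwa [add_comm] at this
    · have hCmem : C ∈ Ultrafilter.of (Filter.cofinite ⊓ Filter.principal C) :=
        Ultrafilter.of_le _ (Filter.mem_inf_of_right (Filter.mem_principal_self C))
      refine Filter.mem_of_superset hCmem fun g hg => ?_
      have hBmem : B ∈ Ultrafilter.of (Filter.cofinite ⊓ Filter.principal B) :=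
        Ultrafilter.of_le _ (Filter.mem_inf_of_right (Filter.mem_principal_self B))
      exact Filter.mem_of_superset hBmem fun x hx => hBC x hx g hg
  · rintro ⟨𝒰, 𝒱, hU, hV, hUV, hVU⟩
    set Us : Set G := {g : G | {x : G | x + g ∈ A} ∈ 𝒱} with hUs
    set Vs : Set G := {g : G | {x : G | x + g ∈ A} ∈ 𝒰} with hVs
    have good : ∀ n, ∀ p ∈ sumsetL A Us Vs n, p.1 ∈ Us ∧ p.2 ∈ Vs := by
      intro n
      induction n with
      | zero => simp [sumsetL]
      | succ n ih =>
          intro p hp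
          rw [sumsetL_succ] at hp
          rcases List.mem_cons.1 hp with rfl | hp
          · have := sumsetPair_spec 𝒰 𝒱 A hU hV hUV hVU (sumsetL A Us Vs n) ih
            exact ⟨this.1, this.2.2.2.1⟩
          · exact ih p hp
    have spec := fun n => sumsetPair_spec 𝒰 𝒱 A hU hV hUV hVU (sumsetL A Us Vs n) (good n)
    set f : ℕ → G × G := sumsetSeq A Us Vs with hf
    have hmem : ∀ m n, m < n → f m ∈ sumsetL A Us Vs n := fun m n h =>
      (mem_sumsetL A Us Vs n (f m)).2 ⟨m, h, rfl⟩
    have hsum : ∀ i j, (f i).1 + (f j).2 ∈ A := by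
      intro i j
      rcases lt_trichotomy i j with h | rfl | h
      · have h5 := (spec j).2.2.2.2.1 (f i) (hmem i j h)
        rw [add_comm]
        exact h5
      · have h6 := (spec i).2.2.2.2.2.1
        rw [add_comm]
        exact h6
      · exact (spec i).2.1 (f j) (hmem j i h)
    have hinj1 : Function.Injective (fun n => (f n).1) := by
      intro m n h
      by_contra hne
      rcases Ne.lt_or_gt hne with hlt | hlt
      · exact (spec n).2.2.1 (f m) (hmem m n hlt) h.symm
      · exact (spec m).2.2.1 (f n) (hmem n m hlt) h
    have hinj2 : Function.Injective (fun n => (f n).2) := by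
      intro m n h
      by_contra hne
      rcases Ne.lt_or_gt hne with hlt | hlt
      · exact (spec n).2.2.2.2.2.2 (f m) (hmem m n hlt) h.symm
      · exact (spec m).2.2.2.2.2.2 (f n) (hmem n m hlt) h
    refine ⟨Set.range (fun n => (f n).1), Set.range (fun n => (f n).2),
        Set.infinite_range_of_injective hinj1, Set.infinite_range_of_injective hinj2, ?_⟩
    rintro b ⟨i, rfl⟩ c ⟨j, rfl⟩
    exact hsum i j
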